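/- Let p > 1 and for k > 0 and γ > 0 with (2/(p+1)) k^{p-1}/γ < (p-1)/(p+1) (so the integrand is well-defined), define T(k, γ) := ∫₀¹ 1/sqrt( (1-s²) - (2/(p+1))(k^{p-1}/γ)(1-s^{p+1}) ) ds. Then for each fixed k > 0, the equation √γ = 2 T(k, γ) (equivalently the time-map condition 1/2 = T(k,γ)/√γ) implies γ → π² as k → 0⁺. That is, if (k_n, γ_n) satisfy √(γ_n) = 2 T(k_n, γ_n), γ_n bounded away from 0, and k_n → 0, then γ_n → π². -/

import Mathlib

open Filter MeasureTheory Real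


lemma aux_integrable : IntervalIntegrable (fun x : ℝ => 1 / Real.sqrt (1 - x ^ 2)) volume 0 1 := by
  have hb : IntervalIntegrable (fun x : ℝ => (1 - x) ^ (-(1/2) : ℝ)) volume 0 1 := by
    have h := (intervalIntegral.intervalIntegrable_rpow' (a := 0) (b := 1) (r := -(1/2)) (by norm_num)).comp_sub_left 1
    simpa using h.symm
  apply hb.mono_fun
  · exact (Measurable.aestronglyMeasurable (by fun_prop))
  · filter_upwards [MeasureTheory.ae_restrict_mem measurableSet_uIoc] with x hx
    rw [Set.uIoc_of_le (by norm_num : (0:ℝ) ≤ 1)] at hx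
    obtain ⟨hx0, hx1⟩ := hx
    have h1x : (0:ℝ) ≤ 1 - x := by linarith
    rw [Real.norm_eq_abs, Real.norm_eq_abs, abs_of_nonneg (by positivity), abs_of_nonneg (by positivity)]
    have hle : 1 - x ≤ 1 - x ^ 2 := by nlinarith
    rw [Real.rpow_neg h1x, ← Real.sqrt_eq_rpow, ← one_div]
    rcases eq_or_lt_of_le hx1 with rfl | hlt
    · norm_num
    · exact one_div_le_one_div_of_le (Real.sqrt_pos.mpr (by linarith)) (Real.sqrt_le_sqrt hle)

lemma aux_value : ∫ x in (0:ℝ)..1, 1 / Real.sqrt (1 - x ^ 2) = π / 2 := by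
  have h := intervalIntegral.integral_eq_sub_of_hasDerivAt_of_le (f := Real.arcsin)
    (f' := fun x => 1 / Real.sqrt (1 - x ^ 2)) zero_le_one
    Real.continuous_arcsin.continuousOn
    (fun x hx => Real.hasDerivAt_arcsin (by linarith [hx.1]) (ne_of_lt hx.2))
    aux_integrable
  rw [h, Real.arcsin_one, Real.arcsin_zero, sub_zero]

lemma key_bounds (p : ℝ) (hp : 1 < p) (d : ℝ) (hd0 : 0 ≤ d) (hd1 : d < 1) :
    IntervalIntegrable (fun s : ℝ => 1 / Real.sqrt ((1 - s^2) - (2/(p+1)) * d * (1 - s ^ (p+1)))) volume 0 1 ∧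
    π/2 ≤ (∫ s in (0:ℝ)..1, 1 / Real.sqrt ((1 - s^2) - (2/(p+1)) * d * (1 - s ^ (p+1)))) ∧
    (∫ s in (0:ℝ)..1, 1 / Real.sqrt ((1 - s^2) - (2/(p+1)) * d * (1 - s ^ (p+1)))) ≤ (1/Real.sqrt (1-d)) * (π/2) := by
  have hp1 : (0:ℝ) < p + 1 := by linarith
  set ε : ℝ := (2/(p+1)) * d with hε
  have hε0 : 0 ≤ ε := by positivity
  set D : ℝ → ℝ := fun s => (1 - s^2) - ε * (1 - s ^ (p+1)) with hD
  set g : ℝ → ℝ := fun s => 1 / Real.sqrt (D s) with hg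
  -- pointwise bounds on Icc 0 1
  have hDub : ∀ s ∈ Set.Icc (0:ℝ) 1, D s ≤ 1 - s^2 := by
    intro s hs
    have h1 : s ^ (p+1) ≤ 1 := Real.rpow_le_one hs.1 hs.2 (by linarith)
    have : 0 ≤ ε * (1 - s ^ (p+1)) := mul_nonneg hε0 (by linarith)
    simp only [hD]; linarith
  have hDlb : ∀ s ∈ Set.Icc (0:ℝ) 1, (1 - d) * (1 - s^2) ≤ D s := by
    intro s hs
    have hb := one_add_mul_self_le_rpow_one_add (s := s^2 - 1)
      (by nlinarith [sq_nonneg s]) (p := (p+1)/2) (by linarith)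
    have hsp : ((1:ℝ) + (s^2 - 1)) ^ ((p+1)/2 : ℝ) = s ^ (p+1) := by
      have h2 : (1:ℝ) + (s^2 - 1) = s ^ ((2:ℕ) : ℝ) := by
        rw [Real.rpow_natCast]; ring
      rw [h2, ← Real.rpow_mul hs.1]
      congr 1; push_cast; ring
    rw [hsp] at hb
    -- hb : 1 + ((p+1)/2) * (s^2 - 1) ≤ s ^ (p+1), so 1 - s^(p+1) ≤ ((p+1)/2)*(1-s^2)
    have hkey : 1 - s ^ (p+1) ≤ ((p+1)/2) * (1 - s^2) := by linarith
    have h3 : ε * (1 - s ^ (p+1)) ≤ ε * (((p+1)/2) * (1 - s^2)) :=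
      mul_le_mul_of_nonneg_left hkey hε0
    have h4 : ε * (((p+1)/2) * (1 - s^2)) = d * (1 - s^2) := by
      rw [hε]; field_simp
    simp only [hD]; nlinarith
  have hD1 : D 1 = 0 := by
    simp only [hD]; rw [Real.one_rpow]; ring
  have hlow : ∀ s ∈ Set.Icc (0:ℝ) 1, 1 / Real.sqrt (1 - s^2) ≤ g s := by
    intro s hs
    rcases eq_or_lt_of_le hs.2 with rfl | hlt
    · simp [hg, hD1]
    · have hpos : 0 < 1 - s^2 := by nlinarith [hs.1]
      have hDpos : 0 < D s := lt_of_lt_of_le (mul_pos (by linarith) hpos) (hDlb s hs)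
      exact one_div_le_one_div_of_le (Real.sqrt_pos.mpr hDpos) (Real.sqrt_le_sqrt (hDub s hs))
  have hhigh : ∀ s ∈ Set.Icc (0:ℝ) 1, g s ≤ (1/Real.sqrt (1-d)) * (1 / Real.sqrt (1 - s^2)) := by
    intro s hs
    rcases eq_or_lt_of_le hs.2 with rfl | hlt
    · simp [hg, hD1]
    · have hpos : 0 < 1 - s^2 := by nlinarith [hs.1]
      have hDpos : 0 < D s := lt_of_lt_of_le (mul_pos (by linarith) hpos) (hDlb s hs)
      have h5 : Real.sqrt ((1-d) * (1 - s^2)) ≤ Real.sqrt (D s) := Real.sqrt_le_sqrt (hDlb s hs)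
      rw [Real.sqrt_mul (by linarith) _] at h5
      calc g s ≤ 1 / (Real.sqrt (1-d) * Real.sqrt (1 - s^2)) := by
                  exact one_div_le_one_div_of_le (mul_pos (Real.sqrt_pos.mpr (by linarith)) (Real.sqrt_pos.mpr hpos)) h5
        _ = (1/Real.sqrt (1-d)) * (1 / Real.sqrt (1 - s^2)) := by rw [one_div, mul_inv, one_div, one_div]
  have hint : IntervalIntegrable g volume 0 1 := by
    apply (aux_integrable.const_mul (1/Real.sqrt (1-d))).mono_fun
    · exact Measurable.aestronglyMeasurable (by fun_prop)
    · filter_upwards [MeasureTheory.ae_restrict_mem measurableSet_uIoc] with x hx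
      rw [Set.uIoc_of_le (by norm_num : (0:ℝ) ≤ 1)] at hx
      have hx' : x ∈ Set.Icc (0:ℝ) 1 := ⟨hx.1.le, hx.2⟩
      rw [Real.norm_eq_abs, Real.norm_eq_abs, abs_of_nonneg (by positivity), abs_of_nonneg (by positivity)]
      exact hhigh x hx'
  refine ⟨hint, ?_, ?_⟩
  · rw [← aux_value]
    exact intervalIntegral.integral_mono_on zero_le_one aux_integrable hint hlow
  · have := intervalIntegral.integral_mono_on zero_le_one hint
      (aux_integrable.const_mul (1/Real.sqrt (1-d))) hhigh
    rwa [intervalIntegral.integral_const_mul, aux_value] at this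

/-- If (kₙ, γₙ) satisfy the time-map relation √γₙ = 2T(kₙ,γₙ), γₙ is bounded away
    from 0, and kₙ → 0, then γₙ → π². -/
theorem stmt_10 (p : ℝ) (hp : 1 < p)
    (T : ℝ → ℝ → ℝ)
    (hT : ∀ k γ : ℝ, 0 < k → 0 < γ →
      (2/(p+1)) * k ^ (p-1) / γ < (p-1)/(p+1) →
      T k γ = ∫ s in (0:ℝ)..1,
        1 / Real.sqrt ((1 - s ^ 2) - (2/(p+1)) * (k ^ (p-1) / γ) * (1 - s ^ (p+1))))
    (k γ : ℕ → ℝ) (c : ℝ) (hc : 0 < c)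
    (hkpos : ∀ n, 0 < k n) (hγc : ∀ n, c ≤ γ n)
    (hwd : ∀ n, (2/(p+1)) * (k n) ^ (p-1) / γ n < (p-1)/(p+1))
    (hrel : ∀ n, Real.sqrt (γ n) = 2 * T (k n) (γ n))
    (hk0 : Tendsto k atTop (nhds 0)) :
    Tendsto γ atTop (nhds (Real.pi ^ 2)) := by
  have hγpos : ∀ n, 0 < γ n := fun n => lt_of_lt_of_le hc (hγc n)
  set δ : ℕ → ℝ := fun n => (k n) ^ (p-1) / γ n with hδdef
  have hδpos : ∀ n, 0 < δ n := fun n => div_pos (Real.rpow_pos_of_pos (hkpos n) _) (hγpos n)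
  have hkp : Tendsto (fun n => (k n) ^ (p-1)) atTop (nhds 0) := by
    have hct : ContinuousAt (fun x : ℝ => x ^ (p-1)) 0 :=
      Real.continuousAt_rpow_const 0 (p-1) (Or.inr (by linarith))
    have := hct.tendsto.comp hk0
    simpa [Function.comp_def, Real.zero_rpow (sub_ne_zero_of_ne (ne_of_gt hp))] using this
  have hδ0 : Tendsto δ atTop (nhds 0) := by
    apply squeeze_zero (fun n => (hδpos n).le) (fun n => ?_) (g := fun n => (k n) ^ (p-1) / c)
    · simpa using hkp.div_const c
    · simp only [hδdef]
      gcongr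
      · exact (Real.rpow_pos_of_pos (hkpos n) _).le
      · exact hγc n
  have hev : ∀ᶠ n in atTop, δ n < 1 := hδ0.eventually_lt_const one_pos
  have key : ∀ n, δ n < 1 → π ≤ Real.sqrt (γ n) ∧ Real.sqrt (γ n) ≤ π / Real.sqrt (1 - δ n) := by
    intro n h1
    obtain ⟨hint, hl, hh⟩ := key_bounds p hp (δ n) (hδpos n).le h1
    have hTeq : T (k n) (γ n) = ∫ s in (0:ℝ)..1,
        1 / Real.sqrt ((1 - s^2) - (2/(p+1)) * (δ n) * (1 - s ^ (p+1))) := by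
      have := hT (k n) (γ n) (hkpos n) (hγpos n) (hwd n)
      simpa only [hδdef] using this
    have hrel' := hrel n
    rw [hTeq] at hrel'
    constructor
    · rw [hrel']; linarith
    · rw [hrel']
      have h2 : 2 * ((1/Real.sqrt (1 - δ n)) * (π/2)) = π / Real.sqrt (1 - δ n) := by ring
      linarith
  have hupper : Tendsto (fun n => π / Real.sqrt (1 - δ n)) atTop (nhds π) := by
    have h1 : Tendsto (fun n => Real.sqrt (1 - δ n)) atTop (nhds 1) := by
      have := (Real.continuous_sqrt.tendsto ((1:ℝ)-0)).comp ((tendsto_const_nhds (x := (1:ℝ))).sub hδ0)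
      simpa [Function.comp_def] using this
    have := (tendsto_const_nhds (x := π)).div h1 one_ne_zero
    simpa [Pi.div_def] using this
  have hsq : Tendsto (fun n => Real.sqrt (γ n)) atTop (nhds π) := by
    apply tendsto_of_tendsto_of_tendsto_of_le_of_le' tendsto_const_nhds hupper
    · filter_upwards [hev] with n hn using (key n hn).1
    · filter_upwards [hev] with n hn using (key n hn).2
  have hfin := hsq.pow 2
  have heq : (fun n => Real.sqrt (γ n) ^ 2) = γ := funext fun n => Real.sq_sqrt (hγpos n).le
  rwa [heq] at hfin
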